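/- Let θ_1,…,θ_K be independent real-valued random variables whose distributions are atomless (so that almost surely there is a unique maximizer), let i* ∈ {1,…,K} be a fixed index, let y ∈ ℝ, and set p = P(θ_{i*} > y), assumed strictly positive. Then for every index i ≠ i*: P(θ_i > θ_j for all j ≠ i, and θ_i < y) ≤ ((1−p)/p) · P(θ_{i*} > θ_j for all j ≠ i*, and θ_i < y). -/

import Mathlib

open MeasureTheory ProbabilityTheory

/-- **Lemma 5 (Thompson-sampling transfer lemma, after Agrawal–Goyal).**
Let `θ_1,…,θ_K` be independent real-valued random variables with atomless distributions
(so that almost surely there is a unique maximizer), let `i*` be a fixed index, `y ∈ ℝ`,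
and let `p = P(θ_{i*} > y)` be strictly positive. Then for every index `i ≠ i*`:
`P(θ_i > θ_j ∀ j ≠ i, and θ_i < y) ≤ ((1−p)/p)·P(θ_{i*} > θ_j ∀ j ≠ i*, and θ_i < y)`. -/
theorem thompson_transfer_lemma {K : ℕ} {Ω : Type*} [MeasurableSpace Ω]
    (P : Measure Ω) [IsProbabilityMeasure P]
    (θ : Fin K → Ω → ℝ) (hmeas : ∀ i, Measurable (θ i))
    (hindep : iIndepFun θ P)
    (hatomless : ∀ (i : Fin K) (x : ℝ), P {ω | θ i ω = x} = 0)
    (istar : Fin K) (y : ℝ) (p : ℝ)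
    (hp : p = (P {ω | y < θ istar ω}).toReal) (hppos : 0 < p)
    (i : Fin K) (hi : i ≠ istar) :
    (P {ω | (∀ j, j ≠ i → θ j ω < θ i ω) ∧ θ i ω < y}).toReal ≤
      ((1 - p) / p) *
        (P {ω | (∀ j, j ≠ istar → θ j ω < θ istar ω) ∧ θ i ω < y}).toReal := by
  classical
  set S : Finset (Fin K) := Finset.univ.erase istar with hS
  have hiS : i ∈ S := Finset.mem_erase.mpr ⟨hi, Finset.mem_univ i⟩
  have histarT : istar ∈ ({istar} : Finset (Fin K)) := Finset.mem_singleton_self istar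
  have hST : Disjoint S ({istar} : Finset (Fin K)) := by
    simp [hS, Finset.disjoint_singleton_right]
  have hindepST := hindep.indepFun_finset S {istar} hST hmeas
  -- the set in the pi space over S
  set sC : Set ((j : S) → ℝ) :=
    {x | (∀ j : S, (j : Fin K) ≠ i → x j < x ⟨i, hiS⟩) ∧ x ⟨i, hiS⟩ < y} with hsCdef
  have hsC : MeasurableSet sC := by
    have hrw : sC = (⋂ j : S, ⋂ (_ : (j : Fin K) ≠ i), {x : (j : S) → ℝ | x j < x ⟨i, hiS⟩})
        ∩ {x : (j : S) → ℝ | x ⟨i, hiS⟩ < y} := by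
      ext x; simp [hsCdef, Set.mem_iInter]
    rw [hrw]
    refine MeasurableSet.inter ?_ (measurableSet_lt (measurable_pi_apply _) measurable_const)
    exact MeasurableSet.iInter fun j => MeasurableSet.iInter fun _ =>
      measurableSet_lt (measurable_pi_apply j) (measurable_pi_apply _)
  set tlt : Set ((j : ({istar} : Finset (Fin K))) → ℝ) :=
    {x | x ⟨istar, histarT⟩ < y} with htltdef
  set tgt : Set ((j : ({istar} : Finset (Fin K))) → ℝ) :=
    {x | y < x ⟨istar, histarT⟩} with htgtdef
  have htlt : MeasurableSet tlt := measurableSet_lt (measurable_pi_apply _) measurable_const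
  have htgt : MeasurableSet tgt := measurableSet_lt measurable_const (measurable_pi_apply _)
  set f : Ω → (j : S) → ℝ := fun a j => θ j a with hf
  set g : Ω → (j : ({istar} : Finset (Fin K))) → ℝ := fun a j => θ j a with hg
  set C : Set Ω := f ⁻¹' sC with hC
  have hCmem : ∀ ω, ω ∈ C ↔ ((∀ j : Fin K, j ≠ i → j ≠ istar → θ j ω < θ i ω) ∧ θ i ω < y) := by
    intro ω
    constructor
    · rintro ⟨h1, h2⟩
      refine ⟨fun j hji hjs => ?_, h2⟩
      exact h1 ⟨j, Finset.mem_erase.mpr ⟨hjs, Finset.mem_univ j⟩⟩ hji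
    · rintro ⟨h1, h2⟩
      refine ⟨fun j hji => ?_, h2⟩
      exact h1 j hji (Finset.mem_erase.mp j.2).1
  -- inclusion 1 : A ⊆ C ∩ {θ istar < y}
  have hincl1 : {ω | (∀ j, j ≠ i → θ j ω < θ i ω) ∧ θ i ω < y} ⊆ C ∩ g ⁻¹' tlt := by
    rintro ω ⟨h1, h2⟩
    refine ⟨(hCmem ω).mpr ⟨fun j hji _ => h1 j hji, h2⟩, ?_⟩
    exact lt_trans (h1 istar (Ne.symm hi)) h2
  -- inclusion 2 : C ∩ {θ istar > y} ⊆ B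
  have hincl2 : C ∩ g ⁻¹' tgt ⊆
      {ω | (∀ j, j ≠ istar → θ j ω < θ istar ω) ∧ θ i ω < y} := by
    rintro ω ⟨hωC, hωg⟩
    obtain ⟨h1, h2⟩ := (hCmem ω).mp hωC
    have hgy : y < θ istar ω := hωg
    refine ⟨fun j hjs => ?_, h2⟩
    by_cases hji : j = i
    · subst hji; exact lt_trans h2 hgy
    · exact lt_trans (lt_trans (h1 j hji hjs) h2) hgy
  -- independence identities
  have hmul_lt : P (C ∩ g ⁻¹' tlt) = P C * P (g ⁻¹' tlt) :=
    hindepST.measure_inter_preimage_eq_mul _ _ hsC htlt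
  have hmul_gt : P (C ∩ g ⁻¹' tgt) = P C * P (g ⁻¹' tgt) :=
    hindepST.measure_inter_preimage_eq_mul _ _ hsC htgt
  have hgt_eq : g ⁻¹' tgt = {ω | y < θ istar ω} := rfl
  -- real-number abbreviations
  set a : ℝ := (P {ω | (∀ j, j ≠ i → θ j ω < θ i ω) ∧ θ i ω < y}).toReal with ha
  set b : ℝ := (P {ω | (∀ j, j ≠ istar → θ j ω < θ istar ω) ∧ θ i ω < y}).toReal with hb
  set c : ℝ := (P C).toReal with hc
  set q : ℝ := (P (g ⁻¹' tlt)).toReal with hq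
  have hfin : ∀ s : Set Ω, P s ≠ ⊤ := fun s => measure_ne_top P s
  have h1 : a ≤ c * q := by
    rw [ha, hc, hq, ← ENNReal.toReal_mul]
    exact ENNReal.toReal_mono (ENNReal.mul_ne_top (hfin _) (hfin _))
      (le_trans (measure_mono hincl1) (le_of_eq hmul_lt))
  have h2 : c * p ≤ b := by
    rw [hb, hc, hp, ← ENNReal.toReal_mul]
    exact ENNReal.toReal_mono (hfin _)
      (le_trans (le_of_eq hmul_gt.symm) (measure_mono (hgt_eq ▸ hincl2)))
  have hqp : q + p ≤ 1 := by
    have hdisj : Disjoint (g ⁻¹' tlt) {ω | y < θ istar ω} := by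
      rw [Set.disjoint_left]
      intro ω h1' h2'
      exact lt_asymm (show θ istar ω < y from h1') h2'
    have := measure_union (μ := P) hdisj (measurableSet_lt measurable_const (hmeas istar))
    have hle : P (g ⁻¹' tlt) + P {ω | y < θ istar ω} ≤ 1 := by
      rw [← this]
      exact prob_le_one
    rw [hq, hp, ← ENNReal.toReal_add (hfin _) (hfin _)]
    calc (P (g ⁻¹' tlt) + P {ω | y < θ istar ω}).toReal ≤ (1 : ENNReal).toReal :=
          ENNReal.toReal_mono (by simp) hle
      _ = 1 := by simp
  have hq0 : 0 ≤ q := ENNReal.toReal_nonneg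
  have hc0 : 0 ≤ c := ENNReal.toReal_nonneg
  rw [div_mul_eq_mul_div, le_div_iff₀ hppos]
  nlinarith [mul_le_mul_of_nonneg_right h1 (le_of_lt hppos),
    mul_le_mul_of_nonneg_left h2 (by linarith : (0:ℝ) ≤ 1 - p),
    mul_le_mul_of_nonneg_left (by linarith : q ≤ 1 - p) hc0,
    mul_le_mul_of_nonneg_right (mul_le_mul_of_nonneg_left (by linarith : q ≤ 1 - p) hc0) (le_of_lt hppos)]
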